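/- A unary query Q = (D, P, G) succeeds if and only if ACCEPT(x) ⊣ START(x) belongs to sat(⟦D⟧ + P + ⟦G⟧), the saturation of the encoded query. -/

import Mathlib

/-!  Base definitions for the Stack semiring: unary flows ("stack operations")
`τ(x) ⊣ σ(x)` are modelled as pairs of lists of unary function symbols
(outermost symbol first).  The resolution product of two stack operations is
defined when one of the two sequences to be unified is a prefix of the other. -/

/-- A stack operation `τ(x) ⊣ σ(x)`: the first component is the head/left term
`τ(x)`, the second the body/right term `σ(x)`, each a sequence of unary
function symbols applied to the variable `x` (outermost first). -/
abbrev SOp := List ℕ × List ℕ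

/-- Resolution product of stack operations (`none` = undefined = 0).
`(τ ⊣ σ)(ρ ⊣ χ)` unifies `σ(x)` with `ρ(y)`. -/
def scomp (f g : SOp) : Option SOp :=
  if f.2 <+: g.1 then some (f.1 ++ g.1.drop f.2.length, g.2)
  else if g.1 <+: f.2 then some (f.1, g.2 ++ f.2.drop g.1.length)
  else none

/-- Height of a stack operation: max of the heights of its two terms. -/
def hOp (f : SOp) : ℕ := max f.1.length f.2.length

/-- A stack operation is a cycle iff its two terms are matchable, which for
unary terms `τ(x)`, `σ(y)` means one sequence is a prefix of the other. -/
def isCycleS (f : SOp) : Prop := f.1 <+: f.2 ∨ f.2 <+: f.1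

/-- `f` is increasing when `h(τ(x)) ≥ h(σ(x))`. -/
def incP (f : SOp) : Prop := f.2.length ≤ f.1.length

/-- `f` is decreasing when `h(τ(x)) ≤ h(σ(x))`. -/
def decP (f : SOp) : Prop := f.1.length ≤ f.2.length

instance : DecidablePred incP := fun f => inferInstanceAs (Decidable (_ ≤ _))
instance : DecidablePred decP := fun f => inferInstanceAs (Decidable (_ ≤ _))

/-- A wiring of the Stack semiring: a finite set (sum) of stack operations. -/
abbrev SWiring := Finset SOp

/-- Product of wirings: pointwise products of flows, keeping defined ones. -/
def smul (F G : SWiring) : SWiring :=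
  (F ×ˢ G).biUnion fun p => (scomp p.1 p.2).toFinset

/-- Powers of a wiring (`spow F 0` is the unit wiring `{x ⊣ x}`). -/
def spow (F : SWiring) : ℕ → SWiring
  | 0 => {(([] : List ℕ), ([] : List ℕ))}
  | n + 1 => smul (spow F n) F

/-- Nilpotency: some (positive) power is 0, i.e. the empty wiring. -/
def SNilpotent (F : SWiring) : Prop := ∃ n, 0 < n ∧ spow F n = ∅

/-- Cyclicity: some power contains a cycle. -/
def SCyclic (F : SWiring) : Prop := ∃ k, 0 < k ∧ ∃ f ∈ spow F k, isCycleS f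

/-- Increasing part of a wiring. -/
def incF (F : SWiring) : SWiring := F.filter incP

/-- Decreasing part of a wiring. -/
def decF (F : SWiring) : SWiring := F.filter decP

/-- The shortcut operation `short(F) = F + F↓·F↑`. -/
def short (F : SWiring) : SWiring := F ∪ smul (decF F) (incF F)

/-- Height of a wiring (0 for the empty wiring). -/
def wheightS (F : SWiring) : ℕ := F.sup hOp

/-- The function symbols occurring in a wiring. -/
def symbolsS (F : SWiring) : Finset ℕ :=
  F.biUnion fun f => f.1.toFinset ∪ f.2.toFinset

/-- Size of a wiring: total number of function symbol occurrences. -/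
def sizeS (F : SWiring) : ℕ := ∑ f ∈ F, (f.1.length + f.2.length)

/-- The saturation `sat(F) = Σₙ shortⁿ(F)`, least fixpoint of `short`
containing `F`. -/
def satSet (F : SWiring) : Set SOp := ⋃ n, (short^[n] F : Finset SOp)

/-! Unary logic programming.  A closed unary term `τ(c)` is a pair
`(τ, c)` of a sequence of unary symbols and a constant.  A unary program is a
wiring of the Stack semiring, its elements read as clauses `τ(x) ⊣ σ(x)`. -/

/-- A closed unary term `τ(c)`. -/
abbrev CT := List ℕ × ℕ

/-- Derivability by resolution from the facts `d ⊣` (`d ∈ D`) and the clauses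
`τ(x) ⊣ σ(x)` of `P`. -/
inductive Derive (D : Finset CT) (P : SWiring) : CT → Prop
  | fact {d : CT} : d ∈ D → Derive D P d
  | step {f : SOp} {μ : List ℕ} {c : ℕ} :
      f ∈ P → Derive D P (f.2 ++ μ, c) → Derive D P (f.1 ++ μ, c)

/-- A unary query `(D, P, G)` succeeds when the goal is derivable. -/
def Succeeds (D : Finset CT) (P : SWiring) (G : CT) : Prop := Derive D P G

/-- Symbol renaming keeping program/data symbols clear of the fresh
symbols: unary program symbols `s ↦ 2s+3`. -/
def rl (s : ℕ) : ℕ := 2 * s + 3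

/-- The unary symbol `𝐜` associated to the constant `c`. -/
def cSym (c : ℕ) : ℕ := 2 * c + 2

/-- The fresh unary symbol `START`. -/
def START : ℕ := 0

/-- The fresh unary symbol `ACCEPT`. -/
def ACCEPT : ℕ := 1

/-- Encoding of a unary data: `⟦D⟧ = { τ(𝐜(x)) ⊣ START(x) : τ(c) ∈ D }`. -/
def encD (D : Finset CT) : SWiring :=
  D.image fun d => (d.1.map rl ++ [cSym d.2], [START])

/-- Encoding of a unary goal `G = τ(c)`: `⟦G⟧ = ACCEPT(x) ⊣ τ(𝐜(x))`. -/
def encG (G : CT) : SOp := ([ACCEPT], G.1.map rl ++ [cSym G.2])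

/-- The program part of a query, with its symbols renamed by `rl`. -/
def encP (P : SWiring) : SWiring := P.image fun f => (f.1.map rl, f.2.map rl)

/-! ### Auxiliary machinery -/

section Aux

/-- One resolution step on ground terms via a flow of `F`. -/
def StepF (F : SWiring) (a b : List ℕ) : Prop :=
  ∃ f ∈ F, ∃ μ : List ℕ, a = f.2 ++ μ ∧ b = f.1 ++ μ

lemma pref_of_eq {a x b y : List ℕ} (h : a ++ x = b ++ y)
    (hl : a.length ≤ b.length) : a <+: b :=
  List.prefix_of_prefix_length_le (h ▸ List.prefix_append a x)
    (List.prefix_append b y) hl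

lemma mem_smul {A B : SWiring} {χ : SOp} :
    χ ∈ smul A B ↔ ∃ f ∈ A, ∃ g ∈ B, scomp f g = some χ := by
  simp only [smul, Finset.mem_biUnion, Finset.mem_product, Option.mem_toFinset, Option.mem_def]
  constructor
  · rintro ⟨⟨f, g⟩, ⟨hf, hg⟩, h⟩; exact ⟨f, hf, g, hg, h⟩
  · rintro ⟨f, hf, g, hg, h⟩; exact ⟨⟨f, g⟩, ⟨hf, hg⟩, h⟩

lemma mem_satSet_iff {F : SWiring} {φ : SOp} :
    φ ∈ satSet F ↔ ∃ n, φ ∈ short^[n] F := by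
  simp [satSet, Set.mem_iUnion]

lemma short_iter_mono {F : SWiring} {m n : ℕ} (h : m ≤ n) :
    short^[m] F ⊆ short^[n] F := by
  induction n with
  | zero => simp_all
  | succ n ih =>
    rcases Nat.lt_succ_iff_lt_or_eq.1 (Nat.lt_succ_of_le h) with h' | h'
    · rw [Function.iterate_succ_apply']
      exact (ih (Nat.lt_succ_iff.1 h')).trans Finset.subset_union_left
    · subst h'; exact fun _ hx => hx

lemma mem_sat_of_mem {F : SWiring} {φ : SOp} (h : φ ∈ F) : φ ∈ satSet F :=
  mem_satSet_iff.2 ⟨0, h⟩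

lemma sat_mul {F : SWiring} {φ ψ χ : SOp} (hφ : φ ∈ satSet F) (hψ : ψ ∈ satSet F)
    (hd : decP φ) (hi : incP ψ) (h : scomp φ ψ = some χ) : χ ∈ satSet F := by
  obtain ⟨m, hm⟩ := mem_satSet_iff.1 hφ
  obtain ⟨n, hn⟩ := mem_satSet_iff.1 hψ
  refine mem_satSet_iff.2 ⟨max m n + 1, ?_⟩
  rw [Function.iterate_succ_apply']
  refine Finset.mem_union_right _ (mem_smul.2 ⟨φ, ?_, ψ, ?_, h⟩)
  · exact Finset.mem_filter.2 ⟨short_iter_mono (le_max_left m n) hm, hd⟩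
  · exact Finset.mem_filter.2 ⟨short_iter_mono (le_max_right m n) hn, hi⟩

/-- Key valley lemma: a chain whose interior stays above both endpoints is
justified by a single flow of the saturation. -/
lemma chain_sat (F : SWiring) : ∀ n, 0 < n → ∀ t : ℕ → List ℕ,
    (∀ j < n, StepF F (t j) (t (j + 1))) →
    (∀ j, 0 < j → j < n → (t 0).length ≤ (t j).length ∧ (t n).length ≤ (t j).length) →
    ∃ φ ∈ satSet F, ∃ μ : List ℕ, t 0 = φ.2 ++ μ ∧ t n = φ.1 ++ μ := by
  intro n
  induction n using Nat.strong_induction_on with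
  | _ n ih =>
    intro hn t hstep hbd
    rcases eq_or_lt_of_le (show 1 ≤ n from hn) with h1 | h1
    · -- n = 1
      obtain ⟨f, hf, μ, h0, h1'⟩ := hstep 0 (by omega)
      subst h1
      exact ⟨f, mem_sat_of_mem hf, μ, h0, h1'⟩
    · -- n ≥ 2 : pick interior argmin i
      obtain ⟨i, hi, hmin⟩ := Finset.exists_min_image (Finset.Icc 1 (n - 1))
        (fun j => (t j).length) ⟨1, by rw [Finset.mem_Icc]; omega⟩
      rw [Finset.mem_Icc] at hi
      have hi1 : 0 < i := hi.1
      have hi2 : i < n := by omega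
      -- subchain 0..i
      obtain ⟨φA, hAsat, μA, hA0, hAi⟩ := ih i hi2 hi1 t
        (fun j hj => hstep j (by omega))
        (fun j hj0 hji => ⟨(hbd j hj0 (by omega)).1,
          hmin j (by rw [Finset.mem_Icc]; omega)⟩)
      -- subchain i..n
      obtain ⟨φB, hBsat, μB, hBi, hBn⟩ := ih (n - i) (by omega) (by omega)
        (fun j => t (i + j))
        (fun j hj => by
          have := hstep (i + j) (by omega)
          simpa [Nat.add_assoc] using this)
        (fun j hj0 hji => by
          constructor
          · exact hmin (i + j) (by rw [Finset.mem_Icc]; omega)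
          · have h' := (hbd (i + j) (by omega) (by omega)).2
            have hin : i + (n - i) = n := by omega
            simpa [hin] using h')
      have hBi' : t i = φB.2 ++ μB := hBi
      have hBn' : t n = φB.1 ++ μB := by
        have hin : i + (n - i) = n := by omega
        calc t n = t (i + (n - i)) := by rw [hin]
        _ = φB.1 ++ μB := hBn
      have heq : φA.1 ++ μA = φB.2 ++ μB := by rw [← hAi, ← hBi']
      have h0i := hbd i hi1 hi2
      have lenA : (t 0).length ≤ (t i).length := h0i.1
      have lenB : (t n).length ≤ (t i).length := h0i.2
      have incA : incP φA := by
        have e0 := congrArg List.length hA0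
        have e1 := congrArg List.length hAi
        simp only [List.length_append] at e0 e1
        unfold incP; omega
      have decB : decP φB := by
        have e0 := congrArg List.length hBi'
        have e1 := congrArg List.length hBn'
        simp only [List.length_append] at e0 e1
        unfold decP; omega
      by_cases hle : φB.2.length ≤ φA.1.length
      · have hpre : φB.2 <+: φA.1 := pref_of_eq heq.symm hle
        obtain ⟨u, hu⟩ := hpre
        have hμ : μB = u ++ μA := by
          rw [← hu, List.append_assoc] at heq
          exact (List.append_cancel_left heq).symm
        have hsc : scomp φB φA = some (φB.1 ++ u, φA.2) := by
          have hp : φB.2 <+: φA.1 := ⟨u, hu⟩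
          simp only [scomp, if_pos hp]
          rw [← hu, List.drop_left]
        refine ⟨(φB.1 ++ u, φA.2), sat_mul hBsat hAsat decB incA hsc, μA, hA0, ?_⟩
        rw [hBn', hμ, ← List.append_assoc]
      · push_neg at hle
        have hpre : φA.1 <+: φB.2 := pref_of_eq heq hle.le
        obtain ⟨u, hu⟩ := hpre
        have hμ : μA = u ++ μB := by
          rw [← hu, List.append_assoc] at heq
          exact List.append_cancel_left heq
        have hsc : scomp φB φA = some (φB.1, φA.2 ++ u) := by
          have hnp : ¬ (φB.2 <+: φA.1) := by
            intro hp; exact absurd hp.length_le (by omega)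
          have hp : φA.1 <+: φB.2 := ⟨u, hu⟩
          simp only [scomp, if_neg hnp, if_pos hp]
          rw [← hu, List.drop_left]
        refine ⟨(φB.1, φA.2 ++ u), sat_mul hBsat hAsat decB incA hsc, μB, ?_, hBn'⟩
        rw [hA0, hμ, ← List.append_assoc]

end Aux

/-! ### Forward direction: derivations yield chains -/

lemma derive_chain {D : Finset CT} {P : SWiring} (F : SWiring)
    (hD : encD D ⊆ F) (hP : encP P ⊆ F) :
    ∀ g : CT, Derive D P g → ∃ n, 0 < n ∧ ∃ t : ℕ → List ℕ,
      t 0 = [START] ∧ t n = g.1.map rl ++ [cSym g.2] ∧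
      (∀ j < n, StepF F (t j) (t (j + 1))) ∧ (∀ j, 1 ≤ (t j).length) := by
  intro g hg
  induction hg with
  | @fact d hd =>
    refine ⟨1, Nat.one_pos, fun j => if j = 0 then [START] else d.1.map rl ++ [cSym d.2],
      by simp, by simp, ?_, ?_⟩
    · intro j hj
      interval_cases j
      refine ⟨(d.1.map rl ++ [cSym d.2], [START]), hD ?_, [], by simp, by simp⟩
      exact Finset.mem_image.2 ⟨d, hd, rfl⟩
    · intro j
      by_cases h : j = 0 <;> simp [h]
  | @step f μ c hf _ ih =>
    obtain ⟨n, hn, t, ht0, htn, hstep, hlen⟩ := ih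
    refine ⟨n + 1, by omega, fun j => if j ≤ n then t j else f.1.map rl ++ (μ.map rl ++ [cSym c]),
      by simp [Nat.zero_le, ht0], ?_, ?_, ?_⟩
    · simp only [if_neg (by omega : ¬ n + 1 ≤ n)]
      simp [List.map_append, List.append_assoc]
    · intro j hj
      rcases Nat.lt_or_ge j n with h | h
      · simp only [if_pos (by omega : j ≤ n), if_pos (by omega : j + 1 ≤ n)]
        exact hstep j h
      · have hjn : j = n := by omega
        subst hjn
        refine ⟨(f.1.map rl, f.2.map rl), hP (Finset.mem_image.2 ⟨f, hf, rfl⟩),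
          μ.map rl ++ [cSym c], ?_, ?_⟩
        · simp only [if_pos (le_refl j)]
          rw [htn]; simp [List.map_append, List.append_assoc]
        · simp only [if_neg (by omega : ¬ j + 1 ≤ j)]
    · intro j
      by_cases h : j ≤ n <;> simp [h, hlen j] <;> omega

lemma forward_dir (D : Finset CT) (P : SWiring) (G : CT) (h : Succeeds D P G) :
    ([ACCEPT], [START]) ∈ satSet (encD D ∪ encP P ∪ {encG G}) := by
  set F := encD D ∪ encP P ∪ {encG G} with hF
  have hD : encD D ⊆ F := le_trans Finset.subset_union_left Finset.subset_union_left
  have hP : encP P ⊆ F := le_trans Finset.subset_union_right Finset.subset_union_left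
  obtain ⟨n, hn, t, ht0, htn, hstep, hlen⟩ := derive_chain F hD hP G h
  set T : ℕ → List ℕ := fun j => if j ≤ n then t j else [ACCEPT] with hT
  have hT0 : T 0 = [START] := by simp [hT, Nat.zero_le, ht0]
  have hTn1 : T (n + 1) = [ACCEPT] := by simp [hT]
  have hchain : ∀ j < n + 1, StepF F (T j) (T (j + 1)) := by
    intro j hj
    rcases Nat.lt_or_ge j n with hlt | hge
    · simp only [hT, if_pos (by omega : j ≤ n), if_pos (by omega : j + 1 ≤ n)]
      exact hstep j hlt
    · have hjn : j = n := by omega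
      subst hjn
      refine ⟨encG G, Finset.mem_union_right _ (Finset.mem_singleton_self _), [], ?_, ?_⟩
      · simp only [hT, if_pos (le_refl j)]
        rw [htn]; simp [encG]
      · simp only [hT, if_neg (by omega : ¬ j + 1 ≤ j)]
        simp [encG]
  have hbd : ∀ j, 0 < j → j < n + 1 →
      (T 0).length ≤ (T j).length ∧ (T (n + 1)).length ≤ (T j).length := by
    intro j hj0 hj1
    have : T j = t j := by simp [hT, (by omega : j ≤ n)]
    rw [hT0, hTn1, this]
    exact ⟨hlen j, hlen j⟩
  obtain ⟨φ, hφ, μ, h0, h1⟩ := chain_sat F (n + 1) (by omega) T hchain hbd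
  rw [hT0] at h0; rw [hTn1] at h1
  rcases μ with _ | ⟨a, l⟩
  · simp only [List.append_nil] at h0 h1
    have : φ = ([ACCEPT], [START]) := by
      obtain ⟨φ1, φ2⟩ := φ; simp_all
    rwa [this] at hφ
  · exfalso
    have e0 := congrArg List.length h0
    have e1 := congrArg List.length h1
    simp only [List.length_append, List.length_cons, List.length_singleton,
      List.length_nil] at e0 e1
    have hp2 : φ.2.length = 0 := by omega
    have hl : l.length = 0 := by omega
    have hp1 : φ.1.length = 0 := by omega
    rw [List.length_eq_zero_iff] at hp2 hl hp1
    rw [hp2, hl] at h0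
    rw [hp1, hl] at h1
    simp [START, ACCEPT] at h0 h1
    omega

/-! ### Backward direction: soundness of saturation -/

/-- Reachability from `START(x)` by resolution steps. -/
def GoodR (F : SWiring) (t : List ℕ) : Prop :=
  Relation.ReflTransGen (StepF F) [START] t

lemma goodR_step {F : SWiring} {f : SOp} (hf : f ∈ F) {μ t : List ℕ}
    (ht : t = f.2 ++ μ) (h : GoodR F t) : GoodR F (f.1 ++ μ) :=
  Relation.ReflTransGen.tail h ⟨f, hf, μ, ht, rfl⟩

lemma sound_of_short : ∀ (F : SWiring) (n : ℕ), ∀ φ ∈ short^[n] F,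
    ∀ μ : List ℕ, GoodR F (φ.2 ++ μ) → GoodR F (φ.1 ++ μ) := by
  intro F n
  induction n with
  | zero => intro φ hφ μ h; exact goodR_step hφ rfl h
  | succ n ih =>
    intro φ hφ μ h
    rw [Function.iterate_succ_apply'] at hφ
    rcases Finset.mem_union.1 hφ with hφ | hφ
    · exact ih φ hφ μ h
    · obtain ⟨f, hf, g, hg, hc⟩ := mem_smul.1 hφ
      have hf' := Finset.mem_filter.1 hf
      have hg' := Finset.mem_filter.1 hg
      unfold scomp at hc
      split_ifs at hc with h1 h2
      · obtain ⟨u, hu⟩ := h1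
        injection hc with hc; subst hc
        simp only
        have hdrop : g.1.drop f.2.length = u := by rw [← hu, List.drop_left]
        rw [hdrop, List.append_assoc]
        refine ih f hf'.1 (u ++ μ) ?_
        rw [← List.append_assoc, hu]
        exact ih g hg'.1 μ h
      · obtain ⟨u, hu⟩ := h2
        injection hc with hc; subst hc
        simp only at h ⊢
        have hdrop : f.2.drop g.1.length = u := by rw [← hu, List.drop_left]
        rw [hdrop] at h
        refine ih f hf'.1 μ ?_
        rw [← hu, List.append_assoc]
        exact ih g hg'.1 (u ++ μ) (by rwa [← List.append_assoc])

/-- Generic derivability of open terms `α(x)` from `x` using program clauses. -/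
inductive GDer (P : SWiring) : List ℕ → Prop
  | nil : GDer P []
  | step {f : SOp} {μ : List ℕ} : f ∈ P → GDer P (f.2 ++ μ) → GDer P (f.1 ++ μ)

/-- Invariant satisfied by all terms reachable from `START(x)`. -/
def QInv (D : Finset CT) (P : SWiring) (G : CT) (t : List ℕ) : Prop :=
  (∃ α, t = α.map rl ++ [START] ∧ GDer P α) ∨
  (∃ τ c, t = τ.map rl ++ [cSym c] ∧ Derive D P (τ, c)) ∨
  (∃ α, t = α.map rl ++ [ACCEPT] ∧ GDer P α ∧ Succeeds D P G)

lemma rl_inj : Function.Injective rl := by intro a b h; simp [rl] at h; omega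

/-- Splitting an equation `β·rl ++ μ = α·rl ++ [x]` when `x` is not a renamed
program symbol. -/
lemma split_eq {β α μ : List ℕ} {x : ℕ} (h : β.map rl ++ μ = α.map rl ++ [x])
    (hx : ∀ s, rl s ≠ x) : ∃ ν, α = β ++ ν ∧ μ = ν.map rl ++ [x] := by
  rcases le_or_gt β.length α.length with hl | hl
  · have hpre : β.map rl <+: α.map rl :=
      pref_of_eq h (by simpa using hl)
    have hβ : β = α.take β.length := by
      apply List.map_injective_iff.2 rl_inj
      rw [List.map_take]
      have := List.prefix_iff_eq_take.1 hpre
      rwa [List.length_map] at this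
    have hα : α = β ++ α.drop β.length := by
      conv_lhs => rw [← List.take_append_drop β.length α, ← hβ]
    refine ⟨α.drop β.length, hα, ?_⟩
    rw [hα, List.map_append, List.append_assoc] at h
    exact List.append_cancel_left h
  · exfalso
    have hpre0 : α.map rl ++ [x] <+: β.map rl ++ μ := by
      rw [h]
    have hpre : α.map rl ++ [x] <+: β.map rl :=
      List.prefix_of_prefix_length_le hpre0 (List.prefix_append _ _)
        (by simp only [List.length_append, List.length_map, List.length_singleton]; omega)
    have hmem : x ∈ β.map rl := hpre.subset (by simp)
    obtain ⟨s, _, hs⟩ := List.mem_map.1 hmem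
    exact hx s hs

lemma eq_snoc {a b μ : List ℕ} {x y : ℕ} (h : (a ++ [x]) ++ μ = b ++ [y]) :
    (μ = [] ∧ a = b ∧ x = y) ∨ (a ++ [x]) <+: b := by
  rcases μ with _ | ⟨m, μ⟩
  · left
    rw [List.append_nil] at h
    obtain ⟨h1, h2⟩ := List.append_inj' h rfl
    exact ⟨rfl, h1, by injection h2⟩
  · right
    have hlen := congrArg List.length h
    simp only [List.length_append, List.length_singleton, List.length_cons] at hlen
    refine pref_of_eq h ?_
    simp only [List.length_append, List.length_singleton]
    omega

lemma inv_step {D : Finset CT} {P : SWiring} {G : CT} {t t' : List ℕ}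
    (h : StepF (encD D ∪ encP P ∪ {encG G}) t t') (hI : QInv D P G t) :
    QInv D P G t' := by
  obtain ⟨f, hf, μ, ht, ht'⟩ := h
  rcases Finset.mem_union.1 hf with hf' | hf'
  · rcases Finset.mem_union.1 hf' with hfd | hfp
    · -- data flow
      obtain ⟨d, hd, rfl⟩ := Finset.mem_image.1 hfd
      rcases hI with ⟨α, hα, hG⟩ | ⟨τ, c, hτ, hDer⟩ | ⟨α, hα, _, _⟩
      · rcases α with _ | ⟨a, α⟩
        · have heq : [START] ++ μ = [START] := by
            rw [← ht, hα]; simp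
          have hμ : μ = [] := by simpa using heq
          refine Or.inr (Or.inl ⟨d.1, d.2, ?_, Derive.fact hd⟩)
          rw [ht', hμ]; simp
        · exfalso
          have heq : START :: μ = rl a :: (α.map rl ++ [START]) := by
            have := ht.symm.trans hα
            simpa using this
          have : START = rl a := by injection heq
          simp [START, rl] at this
      · exfalso
        rcases τ with _ | ⟨a, τ⟩
        · have heq : START :: μ = [cSym c] := by
            have := ht.symm.trans hτ; simpa using this
          have : START = cSym c := by injection heq
          simp [START, cSym] at this
        · have heq : START :: μ = rl a :: (τ.map rl ++ [cSym c]) := by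
            have := ht.symm.trans hτ; simpa using this
          have : START = rl a := by injection heq
          simp [START, rl] at this
      · exfalso
        rcases α with _ | ⟨a, α⟩
        · have heq : START :: μ = [ACCEPT] := by
            have := ht.symm.trans hα; simpa using this
          have : START = ACCEPT := by injection heq
          simp [START, ACCEPT] at this
        · have heq : START :: μ = rl a :: (α.map rl ++ [ACCEPT]) := by
            have := ht.symm.trans hα; simpa using this
          have : START = rl a := by injection heq
          simp [START, rl] at this
    · -- program flow
      obtain ⟨p, hp, rfl⟩ := Finset.mem_image.1 hfp
      rcases hI with ⟨α, hα, hG⟩ | ⟨τ, c, hτ, hDer⟩ | ⟨α, hα, hG, hS⟩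
      · obtain ⟨ν, hαν, hμ⟩ := split_eq (ht.symm.trans hα)
          (fun s => by simp only [rl, START]; omega)
        refine Or.inl ⟨p.1 ++ ν, ?_, GDer.step hp (hαν ▸ hG)⟩
        rw [ht', hμ, List.map_append, List.append_assoc]
      · obtain ⟨ν, hτν, hμ⟩ := split_eq (ht.symm.trans hτ)
          (fun s => by simp only [rl, cSym]; omega)
        refine Or.inr (Or.inl ⟨p.1 ++ ν, c, ?_, Derive.step hp (hτν ▸ hDer)⟩)
        rw [ht', hμ, List.map_append, List.append_assoc]
      · obtain ⟨ν, hαν, hμ⟩ := split_eq (ht.symm.trans hα)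
          (fun s => by simp only [rl, ACCEPT]; omega)
        refine Or.inr (Or.inr ⟨p.1 ++ ν, ?_, GDer.step hp (hαν ▸ hG), hS⟩)
        rw [ht', hμ, List.map_append, List.append_assoc]
  · -- goal flow
    have hfG : f = encG G := Finset.mem_singleton.1 hf'
    subst hfG
    have htG : t = (G.1.map rl ++ [cSym G.2]) ++ μ := ht
    rcases hI with ⟨α, hα, hG⟩ | ⟨τ, c, hτ, hDer⟩ | ⟨α, hα, hG, hS⟩
    · exfalso
      rcases eq_snoc (htG.symm.trans hα) with ⟨hμ, ha, hxy⟩ | hpre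
      · simp only [cSym, START] at hxy; omega
      · have hmem : cSym G.2 ∈ List.map rl α := hpre.subset (by simp)
        obtain ⟨s, _, hs⟩ := List.mem_map.1 hmem
        simp only [rl, cSym] at hs; omega
    · rcases eq_snoc (htG.symm.trans hτ) with ⟨hμ, ha, hxy⟩ | hpre
      · have hG1 : G.1 = τ := List.map_injective_iff.2 rl_inj ha
        have hG2 : G.2 = c := by simp only [cSym] at hxy; omega
        have hs : Succeeds D P G := by
          unfold Succeeds
          rw [← Prod.mk.eta (p := G), hG1, hG2]
          exact hDer
        refine Or.inr (Or.inr ⟨[], ?_, GDer.nil, hs⟩)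
        rw [ht', hμ]; simp [encG]
      · exfalso
        have hmem : cSym G.2 ∈ List.map rl τ := hpre.subset (by simp)
        obtain ⟨s, _, hs⟩ := List.mem_map.1 hmem
        simp only [rl, cSym] at hs; omega
    · exfalso
      rcases eq_snoc (htG.symm.trans hα) with ⟨hμ, ha, hxy⟩ | hpre
      · simp only [cSym, ACCEPT] at hxy; omega
      · have hmem : cSym G.2 ∈ List.map rl α := hpre.subset (by simp)
        obtain ⟨s, _, hs⟩ := List.mem_map.1 hmem
        simp only [rl, cSym] at hs; omega

lemma qinv_of_goodR {D : Finset CT} {P : SWiring} {G : CT} {t : List ℕ}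
    (h : GoodR (encD D ∪ encP P ∪ {encG G}) t) : QInv D P G t := by
  induction h with
  | refl => exact Or.inl ⟨[], by simp, GDer.nil⟩
  | tail _ hstep ih => exact inv_step hstep ih

/-- saturation of unary queries: a unary query `(D, P, G)`
succeeds iff `ACCEPT(x) ⊣ START(x)` belongs to `sat(⟦D⟧ + P + ⟦G⟧)`. -/
theorem query_success_saturation (D : Finset CT) (P : SWiring) (G : CT) :
    Succeeds D P G ↔
      ([ACCEPT], [START]) ∈ satSet (encD D ∪ encP P ∪ {encG G}) := by
  constructor
  · exact forward_dir D P G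
  · intro hmem
    obtain ⟨n, hn⟩ := mem_satSet_iff.1 hmem
    have hsound := sound_of_short _ n _ hn []
    simp only [List.append_nil] at hsound
    have hacc : GoodR (encD D ∪ encP P ∪ {encG G}) [ACCEPT] :=
      hsound Relation.ReflTransGen.refl
    rcases qinv_of_goodR hacc with ⟨α, hα, _⟩ | ⟨τ, c, hτ, _⟩ | ⟨α, hα, _, hs⟩
    · exfalso
      rcases α with _ | ⟨a, α⟩
      · simp [START, ACCEPT] at hα
      · have := congrArg List.length hα
        simp at this
    · exfalso
      rcases τ with _ | ⟨a, τ⟩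
      · simp only [List.map_nil, List.nil_append, ACCEPT, cSym] at hτ
        injection hτ with h1 _; omega
      · have := congrArg List.length hτ
        simp at this
    · rcases α with _ | ⟨a, α⟩
      · exact hs
      · exfalso
        have := congrArg List.length hα
        simp at this
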